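/- For every nonnegative integer k, the k-th derivative of the function x ↦ √(1+x²) on ℝ with k ≥ 1 satisfies |(√(1+x²))^{(k)}| ≤ (5/2)^k · k! for all x ∈ ℝ. -/

import Mathlib

open Complex

/-- Complexification of `x ↦ √(1+x²)`. -/
noncomputable def sqrtC : ℂ → ℂ := fun z => (1 + z ^ 2) ^ (1 / 2 : ℂ)

lemma sqrtC_real (t : ℝ) : sqrtC t = ((Real.sqrt (1 + t ^ 2) : ℝ) : ℂ) := by
  have h0 : (0:ℝ) ≤ 1 + t ^ 2 := by positivity
  rw [Real.sqrt_eq_rpow, Complex.ofReal_cpow h0]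
  unfold sqrtC
  push_cast
  norm_num

/-- The set where `sqrtC` is analytic. -/
def Uslit : Set ℂ := {z | 1 + z ^ 2 ∈ Complex.slitPlane}

lemma isOpen_Uslit : IsOpen Uslit :=
  Complex.isOpen_slitPlane.preimage (by continuity)

lemma sqrtC_diffAt {z : ℂ} (hz : z ∈ Uslit) : DifferentiableAt ℂ sqrtC z := by
  have h : HasDerivAt (fun z : ℂ => 1 + z ^ 2) (2 * z) z := by
    simpa using ((hasDerivAt_pow 2 z).const_add 1)
  exact (h.cpow_const hz).differentiableAt

lemma sqrtC_analytic : AnalyticOnNhd ℂ sqrtC Uslit := by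
  have h : DifferentiableOn ℂ sqrtC Uslit :=
    fun z hz => (sqrtC_diffAt hz).differentiableWithinAt
  exact h.analyticOnNhd isOpen_Uslit

lemma iteratedDeriv_sqrtC_analytic (n : ℕ) :
    AnalyticOnNhd ℂ (iteratedDeriv n sqrtC) Uslit := by
  induction n with
  | zero => simpa [iteratedDeriv_zero] using sqrtC_analytic
  | succ n ih => rw [iteratedDeriv_succ]; exact ih.deriv

lemma ball_subset_Uslit {x : ℝ} {z : ℂ}
    (hz : dist z (x:ℂ) ≤ 2 * Real.sqrt (1 + x ^ 2) / 3) : z ∈ Uslit := by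
  set d := Real.sqrt (1 + x ^ 2) with hd
  have hd2 : d ^ 2 = 1 + x ^ 2 := Real.sq_sqrt (by positivity)
  have hdpos : 0 < d := Real.sqrt_pos.mpr (by positivity)
  have hdist2 : (z.re - x) ^ 2 + z.im ^ 2 ≤ (2 * d / 3) ^ 2 := by
    have h1 : ‖z - x‖ ≤ 2 * d / 3 := by
      simpa [Complex.dist_eq] using hz
    have h2 : ‖z - x‖ ^ 2 = (z.re - x) ^ 2 + z.im ^ 2 := by
      rw [Complex.sq_norm, Complex.normSq_apply]
      simp [Complex.sub_re, Complex.sub_im]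
      ring
    nlinarith [norm_nonneg (z - x)]
  rw [Uslit, Set.mem_setOf_eq, Complex.mem_slitPlane_iff]
  by_contra h
  push_neg at h
  obtain ⟨h1, h2⟩ := h
  have hre : (1 + z ^ 2).re = 1 + z.re ^ 2 - z.im ^ 2 := by
    simp [Complex.add_re, pow_two, Complex.mul_re]; ring
  have him : (1 + z ^ 2).im = 2 * z.re * z.im := by
    simp [Complex.add_im, pow_two, Complex.mul_im]; ring
  rw [hre] at h1
  rw [him] at h2
  rcases mul_eq_zero.mp (by linarith [h2] : z.re * z.im = 0) with ha | hb
  · rw [ha] at hdist2 h1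
    nlinarith
  · rw [hb] at h1
    nlinarith

lemma iteratedDeriv_sqrt_real (k : ℕ) (t : ℝ) :
    iteratedDeriv k (fun x : ℝ => Real.sqrt (1 + x ^ 2)) t
      = (iteratedDeriv k sqrtC t).re := by
  induction k generalizing t with
  | zero => simp [iteratedDeriv_zero, sqrtC_real]
  | succ n ih =>
    rw [iteratedDeriv_succ, iteratedDeriv_succ]
    have hfun : iteratedDeriv n (fun x : ℝ => Real.sqrt (1 + x ^ 2))
        = fun s : ℝ => (iteratedDeriv n sqrtC s).re := funext ih
    rw [hfun]
    have ht : (t : ℂ) ∈ Uslit := ball_subset_Uslit (by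
      rw [dist_self]
      positivity)
    have hda : HasDerivAt (iteratedDeriv n sqrtC)
        (deriv (iteratedDeriv n sqrtC) t) t :=
      ((iteratedDeriv_sqrtC_analytic n t ht).differentiableAt).hasDerivAt
    have := hda.real_of_complex.deriv
    rw [this]

/-- For every `k ≥ 1`, the `k`-th derivative of `x ↦ √(1+x²)` satisfies
`|(√(1+x²))^{(k)}(x)| ≤ (5/2)^k k!` for all real `x`. -/
theorem stmt_11 (k : ℕ) (hk : 1 ≤ k) (x : ℝ) :
    |iteratedDeriv k (fun x : ℝ => Real.sqrt (1 + x ^ 2)) x| ≤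
      (5 / 2 : ℝ) ^ k * Nat.factorial k := by
  obtain ⟨m, rfl⟩ : ∃ m, k = m + 1 := ⟨k - 1, (Nat.succ_pred_eq_of_pos hk).symm⟩
  set d := Real.sqrt (1 + x ^ 2) with hd
  have hd2 : d ^ 2 = 1 + x ^ 2 := Real.sq_sqrt (by positivity)
  have hdpos : 0 < d := Real.sqrt_pos.mpr (by positivity)
  have hd1 : 1 ≤ d := by nlinarith
  set R : NNReal := ⟨2 * d / 3, by positivity⟩ with hR
  have hRcoe : (R : ℝ) = 2 * d / 3 := rfl
  have hRpos : 0 < R := by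
    rw [← NNReal.coe_lt_coe, hRcoe]
    positivity
  have hdiff : DifferentiableOn ℂ sqrtC (Metric.closedBall (x:ℂ) R) := by
    intro z hz
    exact (sqrtC_diffAt (ball_subset_Uslit (by
      simpa [hRcoe] using Metric.mem_closedBall.mp hz))).differentiableWithinAt
  have hps : HasFPowerSeriesOnBall sqrtC (cauchyPowerSeries sqrtC x R) x R :=
    hdiff.hasFPowerSeriesOnBall hRpos
  -- pointwise bound on the circle
  have hbound : ∀ θ : ℝ, ‖sqrtC (circleMap (x:ℂ) R θ)‖ ≤ 5 * d / 3 := by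
    intro θ
    set w := circleMap (x:ℂ) R θ with hw
    have hwx : ‖w - x‖ = (R : ℝ) := by
      have := circleMap_mem_sphere (x:ℂ) R.coe_nonneg θ
      rw [Metric.mem_sphere, Complex.dist_eq] at this
      exact this
    have hxI : ‖(x:ℂ) - I‖ = d := by
      rw [Complex.norm_def, Complex.normSq_apply]
      simp
      rw [hd]
      congr 1
      ring
    have hxI' : ‖(x:ℂ) + I‖ = d := by
      rw [Complex.norm_def, Complex.normSq_apply]
      simp
      rw [hd]
      congr 1
      ring
    have hwI : ‖w - I‖ ≤ 5 * d / 3 := by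
      calc ‖w - I‖ = ‖(w - x) + ((x:ℂ) - I)‖ := by ring_nf
        _ ≤ ‖w - x‖ + ‖(x:ℂ) - I‖ := norm_add_le _ _
        _ = 2 * d / 3 + d := by rw [hwx, hxI, hRcoe]
        _ = 5 * d / 3 := by ring
    have hwI' : ‖w + I‖ ≤ 5 * d / 3 := by
      calc ‖w + I‖ = ‖(w - x) + ((x:ℂ) + I)‖ := by ring_nf
        _ ≤ ‖w - x‖ + ‖(x:ℂ) + I‖ := norm_add_le _ _
        _ = 2 * d / 3 + d := by rw [hwx, hxI', hRcoe]
        _ = 5 * d / 3 := by ring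
    have habs : ‖1 + w ^ 2‖ ≤ (5 * d / 3) ^ 2 := by
      have : (1 + w ^ 2) = (w - I) * (w + I) := by
        have : I * I = -1 := Complex.I_mul_I
        ring_nf
        rw [Complex.I_sq]
        ring
      rw [this, norm_mul]
      have h1 : (0:ℝ) ≤ ‖w - I‖ := norm_nonneg _
      have h2 : (0:ℝ) ≤ ‖w + I‖ := norm_nonneg _
      nlinarith
    have : ‖sqrtC w‖ ≤ ‖1 + w ^ 2‖ ^ ((1:ℝ)/2) := by
      rw [show sqrtC w = (1 + w ^ 2) ^ (1/2 : ℂ) from rfl]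
      simpa using Complex.norm_cpow_le (1 + w ^ 2) (1/2 : ℂ)
    calc ‖sqrtC w‖ ≤ ‖1 + w ^ 2‖ ^ ((1:ℝ)/2) := this
      _ = Real.sqrt (‖1 + w ^ 2‖) := (Real.sqrt_eq_rpow _).symm
      _ ≤ Real.sqrt ((5 * d / 3) ^ 2) := Real.sqrt_le_sqrt habs
      _ = 5 * d / 3 := Real.sqrt_sq (by positivity)
  -- bound on the power series coefficient
  have hcont : Continuous fun θ : ℝ => ‖sqrtC (circleMap (x:ℂ) R θ)‖ := by
    apply Continuous.norm
    rw [continuous_iff_continuousAt]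
    intro θ
    have hmem : circleMap (x:ℂ) R θ ∈ Uslit := by
      apply ball_subset_Uslit
      have := circleMap_mem_sphere (x:ℂ) R.coe_nonneg θ
      rw [Metric.mem_sphere] at this
      rw [this, hRcoe]
    exact ((sqrtC_diffAt hmem).continuousAt).comp (continuous_circleMap _ _).continuousAt
  have hInt : (2 * Real.pi)⁻¹ * ∫ θ : ℝ in (0)..(2 * Real.pi),
      ‖sqrtC (circleMap (x:ℂ) R θ)‖ ≤ 5 * d / 3 := by
    have hle : (∫ θ : ℝ in (0)..(2 * Real.pi), ‖sqrtC (circleMap (x:ℂ) R θ)‖)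
        ≤ ∫ _ : ℝ in (0)..(2 * Real.pi), (5 * d / 3) := by
      apply intervalIntegral.integral_mono_on Real.two_pi_pos.le
        (hcont.intervalIntegrable _ _) (intervalIntegrable_const)
      intro θ _
      exact hbound θ
    rw [intervalIntegral.integral_const, smul_eq_mul, sub_zero] at hle
    have h2pi : (0:ℝ) < 2 * Real.pi := Real.two_pi_pos
    calc (2 * Real.pi)⁻¹ * ∫ θ : ℝ in (0)..(2 * Real.pi), ‖sqrtC (circleMap (x:ℂ) R θ)‖
        ≤ (2 * Real.pi)⁻¹ * (2 * Real.pi * (5 * d / 3)) := by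
          apply mul_le_mul_of_nonneg_left hle (by positivity)
      _ = 5 * d / 3 := by field_simp
  have hcoef : ‖cauchyPowerSeries sqrtC x R (m+1)‖ ≤ (5 * d / 3) * ((2 * d / 3)⁻¹) ^ (m+1) := by
    have := norm_cauchyPowerSeries_le sqrtC (x:ℂ) R (m+1)
    have habsR : |(R:ℝ)| = 2 * d / 3 := by rw [hRcoe]; exact abs_of_pos (by positivity)
    rw [habsR] at this
    refine this.trans ?_
    apply mul_le_mul_of_nonneg_right hInt (by positivity)
  -- from coefficient to iterated derivative
  have hiter : ‖iteratedDeriv (m+1) sqrtC x‖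
      ≤ (m+1).factorial * ((5 * d / 3) * ((2 * d / 3)⁻¹) ^ (m+1)) := by
    have heq := hps.factorial_smul (1:ℂ) (m+1)
    have h1 : iteratedDeriv (m+1) sqrtC x = iteratedFDeriv ℂ (m+1) sqrtC x (fun _ => 1) :=
      iteratedDeriv_eq_iteratedFDeriv
    rw [h1, ← heq, ← Nat.cast_smul_eq_nsmul ℂ, norm_smul, Complex.norm_natCast]
    refine mul_le_mul_of_nonneg_left ?_ (Nat.cast_nonneg _)
    calc ‖cauchyPowerSeries sqrtC x R (m+1) (fun _ => 1)‖
        ≤ ‖cauchyPowerSeries sqrtC x R (m+1)‖ * ∏ _i : Fin (m+1), ‖(1:ℂ)‖ :=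
          ContinuousMultilinearMap.le_opNorm _ _
      _ = ‖cauchyPowerSeries sqrtC x R (m+1)‖ := by simp
      _ ≤ (5 * d / 3) * ((2 * d / 3)⁻¹) ^ (m+1) := hcoef
  -- arithmetic
  have key : (5 * d / 3) * ((2 * d / 3)⁻¹) ^ (m+1) ≤ (5/2 : ℝ) ^ (m+1) := by
    have ht : ((2 * d / 3)⁻¹ : ℝ) ≤ 5/2 := by
      have : (2:ℝ)/3 ≤ 2 * d / 3 := by linarith
      have h23 : (0:ℝ) < 2/3 := by norm_num
      calc ((2 * d / 3)⁻¹ : ℝ) ≤ ((2:ℝ)/3)⁻¹ := by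
            apply inv_anti₀ h23 this
        _ ≤ 5/2 := by norm_num
    have ht0 : (0:ℝ) ≤ (2 * d / 3)⁻¹ := by positivity
    have heq2 : (5 * d / 3) * ((2 * d / 3)⁻¹) ^ (m+1)
        = (5/2) * ((2 * d / 3)⁻¹) ^ m := by
      rw [pow_succ]
      field_simp
    rw [heq2, pow_succ']
    apply mul_le_mul_of_nonneg_left _ (by norm_num : (0:ℝ) ≤ 5/2)
    exact pow_le_pow_left₀ ht0 ht m
  -- conclude
  rw [iteratedDeriv_sqrt_real]
  calc |(iteratedDeriv (m+1) sqrtC x).re| ≤ ‖iteratedDeriv (m+1) sqrtC x‖ :=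
        Complex.abs_re_le_norm _
    _ ≤ (m+1).factorial * ((5 * d / 3) * ((2 * d / 3)⁻¹) ^ (m+1)) := hiter
    _ ≤ (m+1).factorial * (5/2 : ℝ) ^ (m+1) := by
        apply mul_le_mul_of_nonneg_left key (Nat.cast_nonneg _)
    _ = (5/2 : ℝ) ^ (m+1) * (m+1).factorial := by ring
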